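/- Let a, b, c be integers with a ≥ 1, b ≥ 1 and c ≥ 1. Then the determinant of the (3a+6)×(3a+6) integer matrix M(a,b,c) equals (−1)^(a−1) · (3ab+3bc+3ca+3a+3b+3c+2)². -/

import Mathlib

open Matrix

/-- The 9×9 Goeritz matrix `G₁(b,c)` of the checkerboard-colored diagram of the
link `𝓛` arising from the pretzel knot `P(3, 2b+1, 2c+1)`. -/
def G1 (b c : ℤ) : Matrix (Fin 9) (Fin 9) ℤ :=
  !![-1,  0,  0,  -1,   0,   0,    1,      0,      0;
      0, -1,  0,   0,  -1,   0,    0,      1,      0;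
      0,  0, -1,   0,   0,  -1,    0,      0,      1;
     -1,  0,  0, b+1,   0,   0,    0,     -b,      0;
      0, -1,  0,   0, b+1,   0,    0,      0,     -b;
      0,  0, -1,   0,   0, b+1,   -b,      0,      0;
      1,  0,  0,   0,   0,  -b, b+2*c+1, -(c+1), -(c+1);
      0,  1,  0,  -b,   0,   0, -(c+1), b+2*c+1, -(c+1);
      0,  0,  1,   0,  -b,   0, -(c+1), -(c+1), b+2*c+1]

/-- The `(3a+6) × (3a+6)` Goeritz matrix `M(a,b,c)` of the checkerboard-colored diagram
of the link `𝓛` whose double branched cover is the 3-fold cyclic branched cover of the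
pretzel knot `P(2a+1, 2b+1, 2c+1)` (indices here are 0-based): entries with both indices
`≥ 3(a-1)` form a copy of `G₁(b,c)`; the remaining diagonal entries are `-2`; the
remaining entries at distance `3` from the diagonal are `1`; all other entries vanish.
In particular `M 1 b c = G1 b c`. -/
def M (a : ℕ) (b c : ℤ) : Matrix (Fin (3*a+6)) (Fin (3*a+6)) ℤ :=
  Matrix.of fun i j =>
    if h : 3*(a-1) ≤ i.1 ∧ 3*(a-1) ≤ j.1 then
      G1 b c ⟨i.1 - 3*(a-1), by have := i.2; omega⟩ ⟨j.1 - 3*(a-1), by have := j.2; omega⟩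
    else if i.1 = j.1 then -2
    else if i.1 + 3 = j.1 ∨ j.1 + 3 = i.1 then 1
    else 0

section AuxDefs

/-- `M` with value `s` added to the first three diagonal entries, over `ℚ`. -/
def Mq (a : ℕ) (s : ℚ) (b c : ℤ) : Matrix (Fin (3*a+6)) (Fin (3*a+6)) ℚ :=
  Matrix.of fun i j => ((M a b c i j : ℤ) : ℚ) + (if i.1 = j.1 ∧ i.1 < 3 then s else 0)

def e9 : Fin 9 ≃ Fin 3 ⊕ Fin 6 where
  toFun i := if h : i.1 < 3 then Sum.inl ⟨i.1, h⟩ else Sum.inr ⟨i.1 - 3, by omega⟩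
  invFun x := Sum.elim (fun i => ⟨i.1, by omega⟩) (fun j => ⟨j.1 + 3, by omega⟩) x
  left_inv := by decide
  right_inv := by decide

def e6 : Fin 6 ≃ Fin 3 ⊕ Fin 3 where
  toFun i := if h : i.1 < 3 then Sum.inl ⟨i.1, h⟩ else Sum.inr ⟨i.1 - 3, by omega⟩
  invFun x := Sum.elim (fun i => ⟨i.1, by omega⟩) (fun j => ⟨j.1 + 3, by omega⟩) x
  left_inv := by decide
  right_inv := by decide

def B9 : Matrix (Fin 3) (Fin 6) ℚ :=
  !![-1,0,0,1,0,0; 0,-1,0,0,1,0; 0,0,-1,0,0,1]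

def C9 : Matrix (Fin 6) (Fin 3) ℚ :=
  !![-1,0,0; 0,-1,0; 0,0,-1; 1,0,0; 0,1,0; 0,0,1]

def D6 (b c : ℤ) : Matrix (Fin 6) (Fin 6) ℚ :=
  !![b+1,0,0, 0,-b,0;
     0,b+1,0, 0,0,-b;
     0,0,b+1, -b,0,0;
     0,0,-b, b+2*c+1, -(c+1), -(c+1);
     -b,0,0, -(c+1), b+2*c+1, -(c+1);
     0,-b,0, -(c+1), -(c+1), b+2*c+1]

def B6 (b : ℤ) (u : ℚ) : Matrix (Fin 3) (Fin 3) ℚ := !![u,-b,0; 0,u,-b; -b,0,u]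
def C6 (b : ℤ) (u : ℚ) : Matrix (Fin 3) (Fin 3) ℚ := !![u,0,-b; -b,u,0; 0,-b,u]
def D3 (b c : ℤ) (u : ℚ) : Matrix (Fin 3) (Fin 3) ℚ :=
  !![b+2*c+1-u, -(c+1), -(c+1); -(c+1), b+2*c+1-u, -(c+1); -(c+1), -(c+1), b+2*c+1-u]

def eA (a : ℕ) : Fin (3*(a+1)+6) ≃ Fin 3 ⊕ Fin (3*a+6) where
  toFun i := if h : i.1 < 3 then Sum.inl ⟨i.1, h⟩ else Sum.inr ⟨i.1 - 3, by have := i.2; omega⟩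
  invFun x := Sum.elim (fun i => ⟨i.1, by omega⟩) (fun j => ⟨j.1 + 3, by have := j.2; omega⟩) x
  left_inv i := by
    by_cases h : i.1 < 3 <;> simp [h, Fin.ext_iff] <;> omega
  right_inv x := by
    rcases x with i | j
    · simp [i.2]
    · simp [show ¬((j:ℕ)+3 < 3) from by omega, Fin.ext_iff]

def Bblk (a : ℕ) : Matrix (Fin 3) (Fin (3*a+6)) ℚ :=
  Matrix.of fun i j => if j.1 = i.1 then 1 else 0
def Cblk (a : ℕ) : Matrix (Fin (3*a+6)) (Fin 3) ℚ :=
  Matrix.of fun i j => if i.1 = j.1 then 1 else 0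
def Emat (a : ℕ) : Matrix (Fin (3*a+6)) (Fin (3*a+6)) ℚ :=
  Matrix.of fun i j => if i.1 = j.1 ∧ i.1 < 3 then 1 else 0

end AuxDefs

section AuxLemmas

lemma det_fromBlocks_smul_one {m n : ℕ} (x : ℚ) (hx : x ≠ 0)
    (B : Matrix (Fin m) (Fin n) ℚ) (C : Matrix (Fin n) (Fin m) ℚ) (D : Matrix (Fin n) (Fin n) ℚ) :
    (fromBlocks (x • 1) B C D).det = x^m * (D - x⁻¹ • (C * B)).det := by
  haveI : Invertible (x • (1 : Matrix (Fin m) (Fin m) ℚ)) :=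
    ⟨x⁻¹ • 1, by rw [smul_mul_smul_comm, inv_mul_cancel₀ hx, one_mul, one_smul],
      by rw [smul_mul_smul_comm, mul_inv_cancel₀ hx, one_mul, one_smul]⟩
  rw [det_fromBlocks₁₁]
  have hinv : (⅟(x • (1 : Matrix (Fin m) (Fin m) ℚ))) = x⁻¹ • 1 :=
    invOf_eq_right_inv (by rw [smul_mul_smul_comm, mul_inv_cancel₀ hx, one_mul, one_smul])
  rw [hinv, Matrix.mul_smul, Matrix.mul_one, Matrix.smul_mul, det_smul, det_one, mul_one,
    Fintype.card_fin]

lemma M_one (b c : ℤ) : M 1 b c = G1 b c := by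
  ext i j
  simp only [M, of_apply]
  rw [dif_pos (by omega)]
  congr 1 <;> exact Fin.ext (by simp)

set_option maxHeartbeats 2000000 in
lemma hblocks (s : ℚ) (b c : ℤ) :
    (Matrix.of fun i j : Fin 9 => ((G1 b c i j : ℤ) : ℚ) + (if i.1 = j.1 ∧ i.1 < 3 then s else 0))
      = (fromBlocks ((s-1) • 1) B9 C9 (D6 b c)).submatrix e9 e9 := by
  ext i j
  fin_cases i <;> fin_cases j <;>
    norm_num [G1, e9, B9, C9, D6, Matrix.one_apply, Fin.ext_iff] <;> ring

set_option maxHeartbeats 2000000 in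
lemma hblocks2 (b c : ℤ) (u : ℚ) :
    D6 b c - u • (C9 * B9)
      = (fromBlocks (((b:ℚ)+1-u) • 1) (B6 b u) (C6 b u) (D3 b c u)).submatrix e6 e6 := by
  ext i j
  fin_cases i <;> fin_cases j <;>
    norm_num [D6, C9, B9, B6, C6, D3, e6, Matrix.one_apply, Matrix.mul_apply,
      Fin.sum_univ_succ, Fin.ext_iff] <;> ring

set_option maxHeartbeats 1000000 in
lemma hZ (b c : ℤ) (u v : ℚ) :
    D3 b c u - v • (C6 b u * B6 b u)
      = !![(b:ℚ)+2*c+1-u-v*(u^2+(b:ℚ)^2), -((c:ℚ)+1)+v*(u*b), -((c:ℚ)+1)+v*(u*b);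
           -((c:ℚ)+1)+v*(u*b), (b:ℚ)+2*c+1-u-v*(u^2+(b:ℚ)^2), -((c:ℚ)+1)+v*(u*b);
           -((c:ℚ)+1)+v*(u*b), -((c:ℚ)+1)+v*(u*b), (b:ℚ)+2*c+1-u-v*(u^2+(b:ℚ)^2)] := by
  ext i j
  fin_cases i <;> fin_cases j <;>
    norm_num [D3, C6, B6, Matrix.mul_apply, Fin.sum_univ_succ, -mul_eq_mul_left_iff] <;> try ring

lemma det_fin_three_of' (a b c d e f g h i : ℚ) :
    Matrix.det !![a,b,c;d,e,f;g,h,i] = a*e*i - a*f*h - b*d*i + b*f*g + c*d*h - c*e*g := by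
  simp [Matrix.det_fin_three] <;> ring

set_option maxHeartbeats 1000000 in
lemma base (s : ℚ) (b c : ℤ) (hs : s - 1 ≠ 0) (hb2 : (b:ℚ)+1-(s-1)⁻¹ ≠ 0) :
    (Mq 1 s b c).det =
      (s-1)^3 * ((b:ℚ)+1-(s-1)⁻¹)^3 *
      ((((b:ℚ)+2*c+1-(s-1)⁻¹-((b:ℚ)+1-(s-1)⁻¹)⁻¹*(((s-1)⁻¹)^2+(b:ℚ)^2))
          + 2*(-((c:ℚ)+1)+((b:ℚ)+1-(s-1)⁻¹)⁻¹*((s-1)⁻¹*b)))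
        * ((((b:ℚ)+2*c+1-(s-1)⁻¹-((b:ℚ)+1-(s-1)⁻¹)⁻¹*(((s-1)⁻¹)^2+(b:ℚ)^2)))
          - (-((c:ℚ)+1)+((b:ℚ)+1-(s-1)⁻¹)⁻¹*((s-1)⁻¹*b)))^2) := by
  have hMone : ∀ i j, M 1 b c i j = G1 b c i j := fun i j => by rw [M_one]
  have h1 : Mq 1 s b c = (fromBlocks ((s-1) • 1) B9 C9 (D6 b c)).submatrix e9 e9 := by
    unfold Mq
    simp only [hMone]
    exact hblocks s b c
  rw [h1, det_submatrix_equiv_self, det_fromBlocks_smul_one _ hs,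
    hblocks2 b c ((s-1)⁻¹), det_submatrix_equiv_self, det_fromBlocks_smul_one _ hb2,
    hZ b c ((s-1)⁻¹) (((b:ℚ)+1-(s-1)⁻¹)⁻¹), det_fin_three_of']
  ring

lemma M_succ (a : ℕ) (ha : 1 ≤ a) (b c : ℤ) (i j : Fin (3*(a+1)+6))
    (hi : 3 ≤ i.1) (hj : 3 ≤ j.1) :
    M (a+1) b c i j
      = M a b c ⟨i.1-3, by have := i.2; omega⟩ ⟨j.1-3, by have := j.2; omega⟩ := by
  simp only [M, of_apply]
  by_cases hg : 3*((a+1)-1) ≤ i.1 ∧ 3*((a+1)-1) ≤ j.1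
  · rw [dif_pos hg, dif_pos (show 3*(a-1) ≤ i.1-3 ∧ 3*(a-1) ≤ j.1-3 by omega)]
    congr 1 <;> exact Fin.ext (by simp; omega)
  · rw [dif_neg hg, dif_neg (show ¬(3*(a-1) ≤ i.1-3 ∧ 3*(a-1) ≤ j.1-3) by omega)]
    split_ifs <;> first | rfl | omega

lemma hCB (a : ℕ) : Cblk a * Bblk a = Emat a := by
  ext i j
  simp only [Cblk, Bblk, Emat, Matrix.mul_apply, of_apply, Fin.sum_univ_three,
    Fin.val_zero, Fin.val_one, show ((2:Fin 3):ℕ) = 2 from rfl]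
  split_ifs <;> first | omega | (exfalso; omega) | norm_num

lemma Mq_succ (a : ℕ) (ha : 1 ≤ a) (b c : ℤ) (s : ℚ) (hs : s - 2 ≠ 0) :
    (Mq (a+1) s b c).det = (s-2)^3 * (Mq a (-(s-2)⁻¹) b c).det := by
  have h1 : Mq (a+1) s b c
      = (fromBlocks ((s-2) • 1) (Bblk a) (Cblk a) (Mq a 0 b c)).submatrix (eA a) (eA a) := by
    ext i j
    simp only [Matrix.submatrix_apply]
    have hea : ∀ k : Fin (3*(a+1)+6), (hk : k.1 < 3) → eA a k = Sum.inl ⟨k.1, hk⟩ := by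
      intro k hk; simp [eA, hk]
    have heb : ∀ k : Fin (3*(a+1)+6), (hk : ¬(k.1 < 3)) →
        eA a k = Sum.inr ⟨k.1 - 3, by have := k.2; omega⟩ := by
      intro k hk; simp [eA, hk]
    rcases Nat.lt_or_ge i.1 3 with hi | hi <;> rcases Nat.lt_or_ge j.1 3 with hj | hj
    · rw [hea i hi, hea j hj, fromBlocks_apply₁₁]
      simp only [Mq, M, of_apply, Matrix.smul_apply, Matrix.one_apply, Fin.mk.injEq,
        smul_eq_mul]
      rw [dif_neg (by omega)]
      split_ifs <;> first | omega | (exfalso; omega) | (push_cast; ring) | (push_cast; norm_num)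
    · rw [hea i hi, heb j (by omega), fromBlocks_apply₁₂]
      simp only [Mq, M, of_apply, Bblk]
      rw [dif_neg (by omega)]
      split_ifs <;> first | omega | (exfalso; omega) | (push_cast; ring) | (push_cast; norm_num)
    · rw [heb i (by omega), hea j hj, fromBlocks_apply₂₁]
      simp only [Mq, M, of_apply, Cblk]
      rw [dif_neg (by omega)]
      split_ifs <;> first | omega | (exfalso; omega) | (push_cast; ring) | (push_cast; norm_num)
    · rw [heb i (by omega), heb j (by omega), fromBlocks_apply₂₂]
      simp only [Mq, of_apply]
      rw [M_succ a ha b c i j hi hj]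
      rw [if_neg (by omega), ite_self, add_zero]
  rw [h1, det_submatrix_equiv_self, det_fromBlocks_smul_one _ hs, hCB]
  congr 2
  ext i j
  simp only [Mq, Emat, Matrix.sub_apply, Matrix.smul_apply, of_apply, smul_eq_mul]
  split_ifs <;> ring

set_option maxHeartbeats 1000000 in
lemma aux (b c : ℤ) (hb : 1 ≤ b) (a : ℕ) (ha : 1 ≤ a) : ∀ k : ℕ,
      (Mq a ((k:ℚ)/((k:ℚ)+1)) b c).det
        = (-1)^(a-1) * (3*((a:ℚ)+k)*b + 3*(b:ℚ)*c + 3*(c:ℚ)*((a:ℚ)+k) + 3*((a:ℚ)+k)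
            + 3*(b:ℚ) + 3*(c:ℚ) + 2)^2 / ((k:ℚ)+1)^3 := by
  induction a, ha using Nat.le_induction with
  | base =>
    intro k
    have hk0 : (0:ℚ) ≤ (k:ℚ) := Nat.cast_nonneg k
    have hk1 : ((k:ℚ)+1) ≠ 0 := by positivity
    have hbq : (1:ℚ) ≤ (b:ℚ) := by exact_mod_cast hb
    have h1 : (k:ℚ)/((k:ℚ)+1) - 1 = -(((k:ℚ)+1)⁻¹) := by
      field_simp
      ring
    have hs : (k:ℚ)/((k:ℚ)+1) - 1 ≠ 0 := by
      rw [h1]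
      exact neg_ne_zero.2 (inv_ne_zero hk1)
    have hu : ((k:ℚ)/((k:ℚ)+1) - 1)⁻¹ = -((k:ℚ)+1) := by
      rw [h1, inv_neg, inv_inv]
    have hb2 : (b:ℚ)+1-((k:ℚ)/((k:ℚ)+1) - 1)⁻¹ ≠ 0 := by
      rw [hu]
      intro h0
      linarith
    rw [base _ b c hs hb2, hu, h1,
      show (b:ℚ)+1 - -((k:ℚ)+1) = (b:ℚ)+(k:ℚ)+2 from by ring]
    have hB2 : (b:ℚ)+(k:ℚ)+2 ≠ 0 := by intro h0; linarith
    field_simp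
    ring
  | succ n hn ih =>
    intro k
    have hk0 : (0:ℚ) ≤ (k:ℚ) := Nat.cast_nonneg k
    have hk1 : ((k:ℚ)+1) ≠ 0 := by positivity
    have hk2 : ((k:ℚ)+2) ≠ 0 := by positivity
    have hs2 : (k:ℚ)/((k:ℚ)+1) - 2 ≠ 0 := by
      rw [div_sub' hk1]
      apply div_ne_zero _ hk1
      intro h0
      linarith
    have hd1 : (k:ℚ)/((k:ℚ)+1) - 2 = -(((k:ℚ)+2)/((k:ℚ)+1)) := by
      field_simp
      ring
    have hval : -(((k:ℚ)/((k:ℚ)+1) - 2)⁻¹) = ((k+1:ℕ):ℚ)/(((k+1:ℕ):ℚ)+1) := by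
      rw [hd1, inv_neg, neg_neg, inv_div]
      push_cast
      ring
    rw [Mq_succ n hn b c _ hs2, hval, ih (k+1)]
    have hpow : ((-1:ℚ))^(n+1-1) = (-1)^(n-1) * (-1) := by
      rw [show n+1-1 = (n-1)+1 from by omega, pow_succ]
    rw [hpow, hd1]
    push_cast
    field_simp
    ring

end AuxLemmas

theorem stmt10 (a : ℕ) (ha : 1 ≤ a) (b c : ℤ) (hb : 1 ≤ b) (hc : 1 ≤ c) :
    (M a b c).det = (-1)^(a-1) * (3*(a:ℤ)*b + 3*b*c + 3*c*(a:ℤ) + 3*(a:ℤ) + 3*b + 3*c + 2)^2 := by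
  have key := aux b c hb a ha 0
  simp only [Nat.cast_zero, zero_div, add_zero, zero_add, one_pow, div_one] at key
  have hdet : ((M a b c).det : ℚ) = (Mq a 0 b c).det := by
    have hmap : Mq a 0 b c = (M a b c).map (Int.cast : ℤ → ℚ) := by
      ext i j
      simp [Mq, Matrix.map_apply]
    rw [hmap]
    exact RingHom.map_det (Int.castRingHom ℚ) (M a b c)
  rw [key] at hdet
  exact_mod_cast hdet
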